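/- arXiv:2210.06241 — 3 statements merged into one kernel-verified Lean document; each statement's English description precedes it below -/
import Mathlib

section
/- If there exists a binary self-orthogonal [n, k+1, 2m] code, then there exists an even-like binary [n - 2m, k, 2⌈m/2⌉] linear code (a code of length n - 2m, dimension k, minimum distance at least 2⌈m/2⌉, all of whose codewords have even weight). -/
/-- A binary linear code is self-orthogonal if all pairs of codewords have zero
inner product over `F_2`. -/
def IsSO {n : ℕ} (C : Submodule (ZMod 2) (Fin n → ZMod 2)) : Prop :=
  ∀ x ∈ C, ∀ y ∈ C, ∑ i, x i * y i = 0

/-- `C` has minimum distance exactly `d`. -/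
def IsMinDist {n : ℕ} (C : Submodule (ZMod 2) (Fin n → ZMod 2)) (d : ℕ) : Prop :=
  (∃ x ∈ C, x ≠ 0 ∧ hammingNorm x = d) ∧ ∀ x ∈ C, x ≠ 0 → d ≤ hammingNorm x

lemma zmod2_ne_zero : ∀ a : ZMod 2, a ≠ 0 → a = 1 := by decide
lemma zmod2_eq_of_iff : ∀ a b : ZMod 2, (a ≠ 0 ↔ b ≠ 0) → a = b := by decide
lemma zmod2_mul_self : ∀ a : ZMod 2, a * a = a := by decide
lemma zmod2_add_one : ∀ a : ZMod 2, a + 1 ≠ 0 ↔ a = 0 := by decide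

lemma sum_eq_card (n : ℕ) (x : Fin n → ZMod 2) (s : Finset (Fin n)) :
    ∑ i ∈ s, x i = ((s.filter fun i => x i ≠ 0).card : ZMod 2) := by
  classical
  rw [← Finset.sum_filter_ne_zero]
  rw [show ∑ i ∈ s.filter (fun i => x i ≠ 0), x i = ∑ i ∈ s.filter (fun i => x i ≠ 0), 1 from
    Finset.sum_congr rfl (fun i hi => zmod2_ne_zero _ (Finset.mem_filter.mp hi).2)]
  simp

/-- If there exists a binary self-orthogonal `[n, k+1, 2m]` code, then there exists an
even-like binary `[n - 2m, k]` code with minimum distance at least `2⌈m/2⌉`. -/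
theorem so_shortening (n k m : ℕ)
    (h : ∃ C : Submodule (ZMod 2) (Fin n → ZMod 2),
      IsSO C ∧ Module.finrank (ZMod 2) C = k + 1 ∧ IsMinDist C (2 * m)) :
    ∃ C : Submodule (ZMod 2) (Fin (n - 2 * m) → ZMod 2),
      Module.finrank (ZMod 2) C = k ∧ (∀ x ∈ C, ∑ i, x i = 0) ∧
        ∀ x ∈ C, x ≠ 0 → 2 * ((m + 1) / 2) ≤ hammingNorm x := by
  classical
  obtain ⟨C, hSO, hrank, ⟨c, hcC, hc0, hcw⟩, hmin⟩ := h
  set S : Finset (Fin n) := Finset.univ.filter (fun i => c i ≠ 0) with hSdef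
  have hScard : S.card = 2 * m := hcw
  have hcompl : Sᶜ.card = n - 2 * m := by
    rw [Finset.card_compl, hScard, Fintype.card_fin]
  -- the bijection between Fin (n - 2m) and the complement of S
  let e : Fin (n - 2 * m) ≃ {i // i ∈ Sᶜ} := (finCongr hcompl.symm).trans (Sᶜ).equivFin.symm
  let f : Fin (n - 2 * m) → Fin n := fun j => (e j : Fin n)
  have hfinj : Function.Injective f := fun a b hab => e.injective (Subtype.ext hab)
  have hfmem : ∀ j, f j ∈ Sᶜ := fun j => (e j).2
  have hfsurj : ∀ i ∈ Sᶜ, ∃ j, f j = i := fun i hi =>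
    ⟨e.symm ⟨i, hi⟩, by simp [f]⟩
  let π : (Fin n → ZMod 2) →ₗ[ZMod 2] (Fin (n - 2 * m) → ZMod 2) :=
    LinearMap.funLeft (ZMod 2) (ZMod 2) f
  -- counting functions
  set a : (Fin n → ZMod 2) → ℕ := fun x => (S.filter fun i => x i ≠ 0).card with hadef
  set b : (Fin n → ZMod 2) → ℕ := fun x => (Sᶜ.filter fun i => x i ≠ 0).card with hbdef
  have hsplit : ∀ x : Fin n → ZMod 2, hammingNorm x = a x + b x := by
    intro x
    have : (Finset.univ.filter fun i => x i ≠ 0)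
        = (S.filter fun i => x i ≠ 0) ∪ (Sᶜ.filter fun i => x i ≠ 0) := by
      rw [← Finset.filter_union, Finset.union_compl]
    rw [hammingNorm, this, Finset.card_union_of_disjoint]
    exact Finset.disjoint_filter_filter disjoint_compl_right
  have hπnorm : ∀ x : Fin n → ZMod 2, hammingNorm (π x) = b x := by
    intro x
    refine Finset.card_bij (fun j _ => f j) ?_ ?_ ?_
    · intro j hj
      simp only [Finset.mem_filter] at hj ⊢
      exact ⟨hfmem j, hj.2⟩
    · intro j₁ _ j₂ _ hj; exact hfinj hj
    · intro i hi
      simp only [Finset.mem_filter] at hi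
      obtain ⟨j, hj⟩ := hfsurj i hi.1
      refine ⟨j, ?_, hj⟩
      simp only [Finset.mem_filter, Finset.mem_univ, true_and]
      show x (f j) ≠ 0
      rw [hj]; exact hi.2
  -- c vanishes off S
  have hc_off : ∀ i ∈ Sᶜ, c i = 0 := by
    intro i hi
    simp only [Finset.mem_compl, hSdef, Finset.mem_filter, Finset.mem_univ, true_and,
      not_not] at hi
    exact hi
  -- parity facts
  have hwt_even : ∀ x ∈ C, (hammingNorm x : ZMod 2) = 0 := by
    intro x hx
    have := hSO x hx x hx
    rw [Finset.sum_congr rfl (fun i _ => zmod2_mul_self (x i)), sum_eq_card] at this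
    rwa [hammingNorm]
  have ha_even : ∀ x ∈ C, (a x : ZMod 2) = 0 := by
    intro x hx
    have hso := hSO x hx c hcC
    have h2 : ∑ i, x i * c i = ∑ i ∈ S, x i := by
      rw [← Finset.sum_add_sum_compl S (fun i => x i * c i)]
      have hoff : ∑ i ∈ Sᶜ, x i * c i = 0 :=
        Finset.sum_eq_zero fun i hi => by rw [hc_off i hi, mul_zero]
      rw [hoff, add_zero]
      refine Finset.sum_congr rfl fun i hi => ?_
      have hci : c i ≠ 0 := by
        simpa [hSdef] using hi
      rw [zmod2_ne_zero (c i) hci, mul_one]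
    rw [h2, sum_eq_card] at hso
    exact hso
  have hb_even : ∀ x ∈ C, 2 ∣ b x := by
    intro x hx
    have h1 := hwt_even x hx
    have h2 := ha_even x hx
    rw [hsplit, Nat.cast_add, h2, zero_add] at h1
    exact (ZMod.natCast_eq_zero_iff _ 2).mp h1
  have hπc : π c = 0 := by
    funext j
    exact hc_off (f j) (hfmem j)
  -- kernel characterization
  have hker : ∀ x ∈ C, π x = 0 → x = 0 ∨ x = c := by
    intro x hx hπx
    by_cases hx0 : x = 0
    · exact Or.inl hx0
    right
    have hsub : (Finset.univ.filter fun i => x i ≠ 0) ⊆ S := by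
      intro i hi
      simp only [Finset.mem_filter, Finset.mem_univ, true_and] at hi
      by_contra hiS
      obtain ⟨j, hj⟩ := hfsurj i (Finset.mem_compl.mpr hiS)
      have : π x j = 0 := by rw [hπx]; rfl
      rw [show π x j = x (f j) from rfl, hj] at this
      exact hi this
    have hle : hammingNorm x ≤ 2 * m := by
      rw [hammingNorm, ← hScard]
      exact Finset.card_le_card hsub
    have hge := hmin x hx hx0
    have heq : (Finset.univ.filter fun i => x i ≠ 0) = S :=
      Finset.eq_of_subset_of_card_le hsub (by rw [hScard]; exact hge)
    funext i
    refine zmod2_eq_of_iff _ _ ?_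
    constructor
    · intro hxi
      have : i ∈ S := heq ▸ (Finset.mem_filter.mpr ⟨Finset.mem_univ i, hxi⟩)
      simpa [hSdef] using this
    · intro hci
      have : i ∈ S := by simp [hSdef, hci]
      rw [← heq] at this
      exact (Finset.mem_filter.mp this).2
  -- weight bound
  have hbound : ∀ x ∈ C, x ≠ 0 → x ≠ c → m ≤ b x := by
    intro x hx hx0 hxc
    have h1 := hmin x hx hx0
    have hxcC : x + c ∈ C := C.add_mem hx hcC
    have hxc0 : x + c ≠ 0 := by
      intro h0
      apply hxc
      have h2c : c + c = 0 := by
        have h2s : (2 : ZMod 2) • c = 0 := by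
          rw [show (2 : ZMod 2) = 0 by decide, zero_smul]
        rwa [two_smul] at h2s
      calc x = x + c + c := by rw [add_assoc, h2c, add_zero]
        _ = 0 + c := by rw [h0]
        _ = c := zero_add c
    have h2 := hmin (x + c) hxcC hxc0
    -- compute weight of x + c
    have haS : ∀ i ∈ S, (x + c) i ≠ 0 ↔ x i = 0 := by
      intro i hi
      simp only [hSdef, Finset.mem_filter, Finset.mem_univ, true_and] at hi
      have hci : c i = 1 := zmod2_ne_zero _ hi
      simp only [Pi.add_apply, hci]
      exact zmod2_add_one (x i)
    have haxc : a (x + c) = 2 * m - a x := by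
      have : S.filter (fun i => (x + c) i ≠ 0) = S \ S.filter (fun i => x i ≠ 0) := by
        ext i
        simp only [Finset.mem_filter, Finset.mem_sdiff, not_and, not_not]
        constructor
        · intro ⟨hi, hne⟩
          exact ⟨hi, fun _ => (haS i hi).mp hne⟩
        · intro ⟨hi, hx0'⟩
          exact ⟨hi, (haS i hi).mpr (hx0' hi)⟩
      rw [hadef]
      simp only
      rw [this, Finset.card_sdiff_of_subset (Finset.filter_subset _ _), hScard]
    have hbxc : b (x + c) = b x := by
      rw [hbdef]
      simp only
      congr 1
      apply Finset.filter_congr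
      intro i hi
      simp only [Pi.add_apply, hc_off i hi, add_zero]
    have hax_le : a x ≤ 2 * m := by
      rw [← hScard]; exact Finset.card_le_card (Finset.filter_subset _ _)
    rw [hsplit] at h1
    rw [hsplit, haxc, hbxc] at h2
    omega
  -- the shortened code
  refine ⟨C.map π, ?_, ?_, ?_⟩
  · -- dimension
    have hrange : C.map π = LinearMap.range (π.comp C.subtype) := by
      rw [LinearMap.range_comp, Submodule.range_subtype]
    have hkerspan : LinearMap.ker (π.comp C.subtype) =
        Submodule.span (ZMod 2) {(⟨c, hcC⟩ : C)} := by
      apply le_antisymm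
      · intro x hxk
        simp only [LinearMap.mem_ker, LinearMap.comp_apply, Submodule.coe_subtype] at hxk
        rcases hker x.1 x.2 hxk with h0 | hc'
        · have : x = 0 := Subtype.ext h0
          rw [this]; exact Submodule.zero_mem _
        · have : x = ⟨c, hcC⟩ := Subtype.ext hc'
          rw [this]; exact Submodule.mem_span_singleton_self _
      · rw [Submodule.span_singleton_le_iff_mem]
        simp only [LinearMap.mem_ker, LinearMap.comp_apply, Submodule.coe_subtype]
        exact hπc
    have hc0' : (⟨c, hcC⟩ : C) ≠ 0 := fun h => hc0 (congrArg Subtype.val h)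
    have hkdim : Module.finrank (ZMod 2) (LinearMap.ker (π.comp C.subtype)) = 1 := by
      rw [hkerspan]
      exact finrank_span_singleton hc0'
    have := LinearMap.finrank_range_add_finrank_ker (π.comp C.subtype)
    rw [hkdim, hrank] at this
    rw [hrange]
    omega
  · -- even-like
    rintro y ⟨x, hx, rfl⟩
    have : ∑ i, π x i = ((hammingNorm (π x) : ZMod 2)) := by
      rw [sum_eq_card]; rfl
    rw [this, hπnorm]
    obtain ⟨t, ht⟩ := hb_even x hx
    rw [ht]
    push_cast
    ring_nf
    rw [show ((2 : ZMod 2)) = 0 by decide]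
    ring
  · -- minimum distance
    rintro y ⟨x, hx, rfl⟩ hy0
    have hx0 : x ≠ 0 := by rintro rfl; exact hy0 (map_zero π)
    have hxc : x ≠ c := by rintro rfl; exact hy0 hπc
    have h1 := hbound x hx hx0 hxc
    have h2 := hb_even x hx
    rw [hπnorm]
    omega
end

section
/- The Griesmer bound: for any binary linear [n, k, d] code with k ≥ 1, one has n ≥ Σ_{i=0}^{k-1} ⌈d / 2^i⌉. -/
open Finset

private lemma ceil_step (d i : ℕ) (hd : 1 ≤ d) :
    (d + 2^(i+1) - 1)/2^(i+1) = ((d+1)/2 + 2^i - 1)/2^i := by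
  have e1 : 1 ≤ 2^(i+1) := Nat.one_le_two_pow
  have e2 : 1 ≤ 2^i := Nat.one_le_two_pow
  have h1 : d + 2^(i+1) - 1 = (d - 1) + 2^(i+1) := by omega
  have h2 : (d+1)/2 = (d-1)/2 + 1 := by omega
  have h3 : (d-1)/2 + 1 + 2^i - 1 = (d-1)/2 + 2^i := by omega
  rw [h1, h2, h3, Nat.add_div_right _ (by positivity),
    Nat.add_div_right _ (by positivity),
    Nat.div_div_eq_div_mul, ← pow_succ']

section counting
variable {ι : Type} [Fintype ι] (x y : ι → ZMod 2)

private def cA : ℕ := #(univ.filter fun i => y i ≠ 0 ∧ x i ≠ 0)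
private def cA' : ℕ := #(univ.filter fun i => y i = 0 ∧ x i ≠ 0)
private def cB : ℕ := #(univ.filter fun i => y i ≠ 0 ∧ x i = 0)

private lemma cA_add_cA' : cA x y + cA' x y = hammingNorm x := by
  unfold cA cA' hammingNorm
  rw [show (univ.filter fun i => y i ≠ 0 ∧ x i ≠ 0) =
      ((univ.filter fun i => x i ≠ 0).filter fun i => y i ≠ 0) by
    rw [filter_filter]; exact filter_congr fun i _ => by tauto,
    show (univ.filter fun i => y i = 0 ∧ x i ≠ 0) =
      ((univ.filter fun i => x i ≠ 0).filter fun i => ¬ y i ≠ 0) by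
    rw [filter_filter]; exact filter_congr fun i _ => by tauto]
  exact Finset.card_filter_add_card_filter_not _

private lemma wt_y : hammingNorm y = cA x y + cB x y := by
  unfold cA cB hammingNorm
  rw [show (univ.filter fun i => y i ≠ 0 ∧ x i ≠ 0) =
      ((univ.filter fun i => y i ≠ 0).filter fun i => x i ≠ 0) by
    rw [filter_filter],
    show (univ.filter fun i => y i ≠ 0 ∧ x i = 0) =
      ((univ.filter fun i => y i ≠ 0).filter fun i => ¬ x i ≠ 0) by
    rw [filter_filter]; exact filter_congr fun i _ => by tauto]
  exact (Finset.card_filter_add_card_filter_not _).symm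

private lemma wt_xy : hammingNorm (x + y) = cA' x y + cB x y := by
  have key : ∀ a b : ZMod 2, (a + b ≠ 0 ∧ a ≠ 0) ↔ (b = 0 ∧ a ≠ 0) := by decide
  have key2 : ∀ a b : ZMod 2, (a + b ≠ 0 ∧ a = 0) ↔ (b ≠ 0 ∧ a = 0) := by decide
  have := wt_y x (x + y)
  rw [this]
  unfold cA cA' cB
  congr 1
  · refine congrArg _ (filter_congr fun i _ => ?_)
    show ((x + y) i ≠ 0 ∧ x i ≠ 0) ↔ _
    rw [show (x + y) i = x i + y i from rfl]
    exact key (x i) (y i)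
  · refine congrArg _ (filter_congr fun i _ => ?_)
    show ((x + y) i ≠ 0 ∧ x i = 0) ↔ _
    rw [show (x + y) i = x i + y i from rfl]
    exact key2 (x i) (y i)

private lemma wt_res : hammingNorm (fun j : {i // x i = 0} => y j.1) = cB x y := by
  unfold cB hammingNorm
  rw [← Fintype.card_subtype, ← Fintype.card_subtype]
  exact Fintype.card_congr
    (((Equiv.subtypeSubtypeEquivSubtypeInter (fun i => x i = 0) (fun i => y i ≠ 0)).trans
      (Equiv.subtypeEquivRight fun i => and_comm)))

end counting

private lemma griesmer_aux (k : ℕ) : ∀ (ι : Type) [Fintype ι] (d : ℕ)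
    (C : Submodule (ZMod 2) (ι → ZMod 2)),
    Module.finrank (ZMod 2) C = k + 1 →
    (∃ x ∈ C, x ≠ 0 ∧ hammingNorm x = d) →
    (∀ x ∈ C, x ≠ 0 → d ≤ hammingNorm x) →
    ∑ i ∈ Finset.range (k+1), (d + 2 ^ i - 1) / 2 ^ i ≤ Fintype.card ι := by
  induction k with
  | zero =>
    intro ι _ d C hdim hex hmin
    obtain ⟨x, hxC, hx0, hxw⟩ := hex
    simpa using hxw ▸ hammingNorm_le_card_fintype
  | succ k ih =>
    intro ι _ d C hdim hex hmin
    obtain ⟨x, hxC, hx0, hxw⟩ := hex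
    have hd1 : 1 ≤ d := hxw ▸ hammingNorm_pos_iff.mpr hx0
    have hdn : d ≤ Fintype.card ι := hxw ▸ hammingNorm_le_card_fintype
    have addzero : ∀ a b : ZMod 2, a + b = 0 → b = a := by decide
    set π : (ι → ZMod 2) →ₗ[ZMod 2] ({i // x i = 0} → ZMod 2) :=
      LinearMap.funLeft (ZMod 2) (ZMod 2) Subtype.val with hπdef
    have hπx : π x = 0 := funext fun j => j.2
    -- card of new index set
    have hcard : Fintype.card {i // x i = 0} = Fintype.card ι - d := by
      rw [Fintype.card_subtype]
      have h2 := Finset.card_filter_add_card_filter_not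
        (s := (univ : Finset ι)) (p := fun i => x i = 0)
      have h3 : #(univ.filter fun i => ¬ x i = 0) = d := hxw
      have h4 : #(univ : Finset ι) = Fintype.card ι := rfl
      omega
    -- kernel elements are 0 or x
    have hker : ∀ y ∈ C, π y = 0 → y = 0 ∨ y = x := by
      intro y hyC hy0
      by_contra h
      push_neg at h
      obtain ⟨hy0', hyx⟩ := h
      have hB : cB x y = 0 := by
        have hwz : hammingNorm (π y) = cB x y := wt_res x y
        rw [hy0] at hwz; simpa using hwz.symm
      have h1 : d ≤ cA x y + cB x y := (wt_y x y) ▸ hmin y hyC hy0'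
      have hxy0 : x + y ≠ 0 := by
        intro h
        exact hyx (funext fun i => addzero (x i) (y i) (congrFun h i))
      have h2 : d ≤ cA' x y + cB x y :=
        (wt_xy x y) ▸ hmin (x+y) (C.add_mem hxC hyC) hxy0
      have h3 := cA_add_cA' x y
      rw [hxw] at h3
      omega
    -- rank computation
    have hxC' : (⟨x, hxC⟩ : C) ≠ 0 := fun h => hx0 (congrArg Subtype.val h)
    set φ : C →ₗ[ZMod 2] ({i // x i = 0} → ZMod 2) := π ∘ₗ C.subtype with hφdef
    have hkerφ : LinearMap.ker φ = Submodule.span (ZMod 2) {(⟨x, hxC⟩ : C)} := by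
      ext y
      simp only [LinearMap.mem_ker, Submodule.mem_span_singleton]
      constructor
      · intro h
        rcases hker y.1 y.2 h with h0 | hx
        · exact ⟨0, by rw [zero_smul]; exact (Subtype.ext h0).symm⟩
        · exact ⟨1, by rw [one_smul]; exact (Subtype.ext hx).symm⟩
      · rintro ⟨a, rfl⟩
        show π ((a • (⟨x, hxC⟩ : C)) : C).1 = 0
        rw [Submodule.coe_smul, map_smul, hπx, smul_zero]
    have hrange : LinearMap.range φ = C.map π := by
      rw [hφdef, LinearMap.range_comp, Submodule.range_subtype]
    have hrk : Module.finrank (ZMod 2) (C.map π) = k + 1 := by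
      have hrn := LinearMap.finrank_range_add_finrank_ker φ
      rw [hdim, hrange, hkerφ, finrank_span_singleton hxC'] at hrn
      omega
    -- min weight of residual code
    have hresmin : ∀ z ∈ C.map π, z ≠ 0 → (d+1)/2 ≤ hammingNorm z := by
      intro z hz hz0
      obtain ⟨y, hyC, rfl⟩ := hz
      have hwz : hammingNorm (π y) = cB x y := wt_res x y
      have hy0 : y ≠ 0 := fun h => hz0 (by rw [h, map_zero])
      have hyx : y ≠ x := fun h => hz0 (by rw [h, hπx])
      have h1 : d ≤ cA x y + cB x y := (wt_y x y) ▸ hmin y hyC hy0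
      have hxy0 : x + y ≠ 0 := by
        intro h
        exact hyx (funext fun i => addzero (x i) (y i) (congrFun h i))
      have h2 : d ≤ cA' x y + cB x y :=
        (wt_xy x y) ▸ hmin (x+y) (C.add_mem hxC hyC) hxy0
      have h3 := cA_add_cA' x y
      rw [hxw] at h3
      rw [hwz]
      omega
    -- the residual code is nontrivial
    have hne : ∃ z ∈ C.map π, z ≠ 0 := by
      have hnt : Nontrivial (C.map π) := by
        apply Module.nontrivial_of_finrank_pos (R := ZMod 2)
        omega
      obtain ⟨⟨z, hz⟩, hz0⟩ := exists_ne (0 : C.map π)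
      exact ⟨z, hz, fun h => hz0 (Subtype.ext h)⟩
    -- minimum distance of the residual code
    set S : Set ℕ := {m | ∃ z ∈ C.map π, z ≠ 0 ∧ hammingNorm z = m} with hS
    have hSne : S.Nonempty := by
      obtain ⟨z, hz, hz0⟩ := hne
      exact ⟨hammingNorm z, z, hz, hz0, rfl⟩
    set d' : ℕ := sInf S with hd'
    have hd'mem : ∃ z ∈ C.map π, z ≠ 0 ∧ hammingNorm z = d' := Nat.sInf_mem hSne
    have hd'min : ∀ z ∈ C.map π, z ≠ 0 → d' ≤ hammingNorm z := by
      intro z hz hz0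
      exact Nat.sInf_le ⟨z, hz, hz0, rfl⟩
    have hd'lb : (d+1)/2 ≤ d' := by
      obtain ⟨z, hz, hz0, hzw⟩ := hd'mem
      exact hzw ▸ hresmin z hz hz0
    have hih := ih {i // x i = 0} d' (C.map π) hrk hd'mem hd'min
    rw [hcard] at hih
    -- final arithmetic
    rw [Finset.sum_range_succ']
    have hsum : ∑ i ∈ Finset.range (k+1), (d + 2^(i+1) - 1)/2^(i+1) ≤
        ∑ i ∈ Finset.range (k+1), (d' + 2^i - 1)/2^i := by
      refine Finset.sum_le_sum fun i _ => ?_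
      rw [ceil_step d i hd1]
      have : (d+1)/2 + 2^i - 1 ≤ d' + 2^i - 1 := by omega
      exact Nat.div_le_div_right this
    have h0 : (d + 2^0 - 1)/2^0 = d := by norm_num
    rw [h0]
    omega

/-- The Griesmer bound: any binary `[n,k,d]` code with `k ≥ 1` satisfies
`n ≥ Σ_{i=0}^{k-1} ⌈d / 2^i⌉` (the ceiling `⌈d/2^i⌉` is `(d + 2^i - 1)/2^i` in `ℕ`). -/
theorem griesmer_bound (n k d : ℕ) (hk : 1 ≤ k)
    (C : Submodule (ZMod 2) (Fin n → ZMod 2))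
    (hdim : Module.finrank (ZMod 2) C = k) (hd : IsMinDist C d) :
    ∑ i ∈ Finset.range k, (d + 2 ^ i - 1) / 2 ^ i ≤ n := by
  obtain ⟨k, rfl⟩ : ∃ m, k = m + 1 := ⟨k - 1, by omega⟩
  have := griesmer_aux k (Fin n) d C hdim hd.1 hd.2
  simpa using this
end

section
/- For every integer m ≥ 1, if there exists a binary self-orthogonal [31m + 6, 5] code with minimum distance ≥ 16m + 2, then there exists an even-like binary [15m + 4, 4] code with minimum distance ≥ 8m + 2, contradicting the Griesmer bound; hence no binary self-orthogonal [31m + 6, 5, 16m + 2] code exists. -/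
namespace NoSOAux

open Finset

variable {N : ℕ}

abbrev VV (N : ℕ) := Fin N → ZMod 2

def supp (x : VV N) : Finset (Fin N) := {i | x i ≠ 0}

lemma mem_supp {x : VV N} {i : Fin N} : i ∈ supp x ↔ x i ≠ 0 := by simp [supp]

lemma wt_eq (x : VV N) : hammingNorm x = (supp x).card := rfl

lemma add_eq_zero_iff (x y : VV N) : x + y = 0 ↔ x = y := by
  constructor
  · intro h
    funext i
    have h2 : ∀ a b : ZMod 2, a + b = 0 → a = b := by decide
    exact h2 _ _ (congrFun h i)
  · rintro rfl
    funext i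
    have h : ∀ a : ZMod 2, a + a = 0 := by decide
    exact h (x i)

lemma supp_add (x y : VV N) :
    supp (x + y) = (supp x ∪ supp y) \ (supp x ∩ supp y) := by
  ext i
  have h : ∀ a b : ZMod 2,
      (a + b ≠ 0 ↔ ((a ≠ 0 ∨ b ≠ 0) ∧ ¬(a ≠ 0 ∧ b ≠ 0))) := by decide
  simp only [supp, Finset.mem_filter, Finset.mem_sdiff, Finset.mem_union,
    Finset.mem_inter, Finset.mem_univ, true_and, Pi.add_apply]
  have := h (x i) (y i)
  tauto

lemma card_add (x y : VV N) :
    (supp (x + y)).card + 2 * (supp x ∩ supp y).card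
      = (supp x).card + (supp y).card := by
  rw [supp_add, card_sdiff_of_subset (inter_subset_union)]
  have h1 := card_union_add_card_inter (supp x) (supp y)
  have h2 : (supp x ∩ supp y).card ≤ (supp x ∪ supp y).card :=
    card_le_card inter_subset_union
  omega

def proj (A : Finset (Fin N)) : VV N →ₗ[ZMod 2] VV N where
  toFun y := fun i => if i ∈ A then 0 else y i
  map_add' y z := by funext i; by_cases h : i ∈ A <;> simp [h]
  map_smul' c y := by funext i; by_cases h : i ∈ A <;> simp [h]

lemma proj_apply (A : Finset (Fin N)) (y : VV N) (i : Fin N) :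
    proj A y i = if i ∈ A then 0 else y i := rfl

lemma supp_proj (A : Finset (Fin N)) (y : VV N) :
    supp (proj A y) = supp y \ A := by
  ext i
  by_cases h : i ∈ A <;> simp [mem_supp, proj_apply, h]

lemma proj_self (x : VV N) : proj (supp x) x = 0 := by
  funext i
  rw [proj_apply]
  by_cases h : i ∈ supp x
  · simp [h]
  · simp [h, not_not.1 (mem_supp.not.1 h)]

lemma dot_eq (x y : VV N) :
    ∑ i, x i * y i = (((supp x ∩ supp y).card : ℕ) : ZMod 2) := by
  have h : ∀ a b : ZMod 2, a * b = if a ≠ 0 ∧ b ≠ 0 then 1 else 0 := by decide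
  classical
  calc ∑ i, x i * y i
      = ∑ i, if x i ≠ 0 ∧ y i ≠ 0 then (1 : ZMod 2) else 0 :=
        Finset.sum_congr rfl fun i _ => h (x i) (y i)
    _ = ((Finset.univ.filter (fun i => x i ≠ 0 ∧ y i ≠ 0)).card : ZMod 2) :=
        Finset.sum_boole _ _
    _ = _ := by
        congr 2
        ext i
        simp [mem_supp]

noncomputable def codeF (C : Submodule (ZMod 2) (VV N)) : Finset (VV N) :=
  @Finset.filter _ (· ∈ C) (Classical.decPred _) Finset.univ

lemma mem_codeF {C : Submodule (ZMod 2) (VV N)} {y : VV N} :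
    y ∈ codeF C ↔ y ∈ C := by
  simp [codeF]

lemma codeF_card (C : Submodule (ZMod 2) (VV N)) :
    (codeF C).card = 2 ^ Module.finrank (ZMod 2) C := by
  classical
  have h1 : codeF C = (C : Set (VV N)).toFinset := by
    ext y; simp [mem_codeF, Set.mem_toFinset]
  rw [h1, Set.toFinset_card]
  have := Module.card_eq_pow_finrank (K := ZMod 2) (V := C)
  rwa [ZMod.card 2] at this

lemma pair_count (C : Submodule (ZMod 2) (VV N)) (i : Fin N) :
    2 * ((codeF C).filter (fun y => y i ≠ 0)).card ≤ (codeF C).card := by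
  classical
  by_cases hne : ((codeF C).filter (fun y => y i ≠ 0)).Nonempty
  · obtain ⟨c0, hc0⟩ := hne
    rw [Finset.mem_filter] at hc0
    have key : ((codeF C).filter (fun y => y i ≠ 0)).card
        ≤ ((codeF C).filter (fun y => ¬ y i ≠ 0)).card := by
      apply Finset.card_le_card_of_injOn (fun y => y + c0)
      · intro y hy
        rw [Finset.mem_coe, Finset.mem_filter] at hy ⊢
        refine ⟨mem_codeF.2 (C.add_mem (mem_codeF.1 hy.1) (mem_codeF.1 hc0.1)), ?_⟩
        have h : ∀ a b : ZMod 2, a ≠ 0 → b ≠ 0 → ¬ (a + b ≠ 0) := by decide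
        exact h _ _ hy.2 hc0.2
      · intro a _ b _ h
        exact add_right_cancel h
    have htot : ((codeF C).filter (fun y => y i ≠ 0)).card
        + ((codeF C).filter (fun y => ¬ y i ≠ 0)).card = (codeF C).card :=
      Finset.card_filter_add_card_filter_not (fun y : VV N => y i ≠ 0)
    calc 2 * ((codeF C).filter (fun y => y i ≠ 0)).card
        = ((codeF C).filter (fun y => y i ≠ 0)).card
          + ((codeF C).filter (fun y => y i ≠ 0)).card := two_mul _
      _ ≤ ((codeF C).filter (fun y => y i ≠ 0)).card
          + ((codeF C).filter (fun y => ¬ y i ≠ 0)).card := Nat.add_le_add_left key _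
      _ = (codeF C).card := htot
  · rw [Finset.not_nonempty_iff_eq_empty] at hne
    rw [hne]; simp

lemma code_sum_le (C : Submodule (ZMod 2) (VV N)) (T : Finset (Fin N))
    (hT : ∀ y ∈ C, ∀ i, i ∉ T → y i = 0) :
    2 * ∑ y ∈ codeF C, hammingNorm y ≤ (codeF C).card * T.card := by
  classical
  have h1 : ∀ y ∈ codeF C,
      hammingNorm y = ∑ i ∈ T, (if y i ≠ 0 then 1 else 0) := by
    intro y hy
    rw [Finset.sum_boole, Nat.cast_id]
    unfold hammingNorm
    congr 1
    ext i
    simp only [Finset.mem_filter, Finset.mem_univ, true_and]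
    constructor
    · intro h
      refine ⟨?_, h⟩
      by_contra hi
      exact h (hT y (mem_codeF.1 hy) i hi)
    · exact fun h => h.2
  calc 2 * ∑ y ∈ codeF C, hammingNorm y
      = 2 * ∑ y ∈ codeF C, ∑ i ∈ T, (if y i ≠ 0 then 1 else 0) := by
        rw [Finset.sum_congr rfl h1]
    _ = 2 * ∑ i ∈ T, ∑ y ∈ codeF C, (if y i ≠ 0 then 1 else 0) := by
        rw [Finset.sum_comm]
    _ = ∑ i ∈ T, 2 * ((codeF C).filter (fun y => y i ≠ 0)).card := by
        rw [Finset.mul_sum]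
        refine Finset.sum_congr rfl fun i _ => ?_
        rw [Finset.sum_boole, Nat.cast_id]
    _ ≤ ∑ i ∈ T, (codeF C).card :=
        Finset.sum_le_sum fun i _ => pair_count C i
    _ = (codeF C).card * T.card := by
        rw [Finset.sum_const, smul_eq_mul, mul_comm]

lemma code_sum_ge (C : Submodule (ZMod 2) (VV N)) (d : ℕ)
    (h : ∀ y ∈ C, y ≠ 0 → d ≤ hammingNorm y) :
    ((codeF C).card - 1) * d ≤ ∑ y ∈ codeF C, hammingNorm y := by
  classical
  have h0 : (0 : VV N) ∈ codeF C := mem_codeF.2 C.zero_mem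
  calc ((codeF C).card - 1) * d = ((codeF C).erase 0).card * d := by
        rw [Finset.card_erase_of_mem h0]
    _ ≤ ∑ y ∈ (codeF C).erase 0, hammingNorm y := by
        rw [← smul_eq_mul]
        apply Finset.card_nsmul_le_sum
        intro y hy
        exact h y (mem_codeF.1 (Finset.mem_of_mem_erase hy)) (Finset.ne_of_mem_erase hy)
    _ ≤ ∑ y ∈ codeF C, hammingNorm y :=
        Finset.sum_le_sum_of_subset (Finset.erase_subset _ _)

lemma resid_dist (C : Submodule (ZMod 2) (VV N)) (d : ℕ)
    (hd : ∀ y ∈ C, y ≠ 0 → d ≤ hammingNorm y) (x : VV N) (hx : x ∈ C) :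
    ∀ z ∈ C.map (proj (supp x)), z ≠ 0 →
      2 * d ≤ 2 * hammingNorm z + hammingNorm x := by
  rintro z hz hz0
  obtain ⟨y, hyC, rfl⟩ := Submodule.mem_map.1 hz
  have hy0 : y ≠ 0 := by
    rintro rfl; exact hz0 (map_zero _)
  have hyx : y ≠ x := by
    rintro rfl; exact hz0 (proj_self y)
  have hxy0 : x + y ≠ 0 := fun h => hyx ((add_eq_zero_iff x y).1 h).symm
  have h1 : d ≤ hammingNorm y := hd y hyC hy0
  have h2 : d ≤ hammingNorm (x + y) := hd _ (C.add_mem hx hyC) hxy0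
  have h3 := card_add x y
  have h4 : (supp y \ supp x).card + (supp y ∩ supp x).card = (supp y).card :=
    card_sdiff_add_card_inter _ _
  have h5 : supp y ∩ supp x = supp x ∩ supp y := inter_comm _ _
  simp only [wt_eq] at h1 h2 ⊢
  rw [supp_proj]
  rw [h5] at h4
  omega

lemma resid_rank (C : Submodule (ZMod 2) (VV N)) (d : ℕ)
    (hd : ∀ y ∈ C, y ≠ 0 → d ≤ hammingNorm y) (x : VV N) (hx : x ∈ C)
    (hx0 : x ≠ 0) (hw : hammingNorm x < 2 * d) :
    Module.finrank (ZMod 2) (C.map (proj (supp x))) + 1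
      = Module.finrank (ZMod 2) C := by
  classical
  set f := (proj (supp x)).comp C.subtype with hf
  have hrange : LinearMap.range f = C.map (proj (supp x)) := by
    rw [hf, LinearMap.range_comp, Submodule.range_subtype]
  have hker : LinearMap.ker f = Submodule.span (ZMod 2) {(⟨x, hx⟩ : C)} := by
    apply le_antisymm
    · intro y hy
      rw [LinearMap.mem_ker] at hy
      have hyv : proj (supp x) (y : VV N) = 0 := hy
      have hsub : supp (y : VV N) ⊆ supp x := by
        intro i hi
        by_contra hni
        have := congrFun hyv i
        rw [proj_apply, if_neg hni] at this
        exact mem_supp.1 hi this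
      by_cases h0 : (y : VV N) = 0
      · have : y = 0 := Subtype.ext h0
        rw [this]; exact Submodule.zero_mem _
      rcases eq_or_ne (y : VV N) x with he | hne
      · have : y = ⟨x, hx⟩ := Subtype.ext he
        rw [this]; exact Submodule.mem_span_singleton_self _
      · exfalso
        have h1 : d ≤ hammingNorm (y : VV N) := hd _ y.2 h0
        have hxy0 : x + (y : VV N) ≠ 0 := fun h =>
          hne ((add_eq_zero_iff x _).1 h).symm
        have h2 : d ≤ hammingNorm (x + (y : VV N)) :=
          hd _ (C.add_mem hx y.2) hxy0
        have h3 := card_add x (y : VV N)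
        have h4 : supp x ∩ supp (y : VV N) = supp (y : VV N) :=
          inter_eq_right.2 hsub
        rw [h4] at h3
        simp only [wt_eq] at h1 h2 hw
        have h6 : (supp (y : VV N)).card ≤ (supp x).card := card_le_card hsub
        omega
    · rw [Submodule.span_le, Set.singleton_subset_iff]
      rw [SetLike.mem_coe, LinearMap.mem_ker]
      exact proj_self x
  have hrn := LinearMap.finrank_range_add_finrank_ker f
  rw [hrange, hker] at hrn
  rw [finrank_span_singleton (by
    intro h
    exact hx0 (by simpa [Subtype.ext_iff] using h))] at hrn
  exact hrn

/-- The main non-existence result. -/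
lemma key (m : ℕ) :
    ¬ ∃ C : Submodule (ZMod 2) (Fin (31 * m + 6) → ZMod 2),
        IsSO C ∧ Module.finrank (ZMod 2) C = 5 ∧
          ∀ x ∈ C, x ≠ 0 → 16 * m + 2 ≤ hammingNorm x := by
  rintro ⟨C, hSO, hrk, hd⟩
  classical
  -- basic facts about C
  have hcard : (codeF C).card = 32 := by rw [codeF_card, hrk]; norm_num
  have heven : ∀ y ∈ C, 2 ∣ hammingNorm y := by
    intro y hy
    have h := hSO y hy y hy
    rw [dot_eq, inter_self] at h
    rw [wt_eq]
    exact (ZMod.natCast_eq_zero_iff _ 2).1 h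
  have hinter : ∀ x ∈ C, ∀ y ∈ C, 2 ∣ (supp x ∩ supp y).card := by
    intro x hx y hy
    exact (ZMod.natCast_eq_zero_iff _ 2).1 (by rw [← dot_eq]; exact hSO x hx y hy)
  have hub0 := code_sum_le C Finset.univ (by simp)
  have hcU : (Finset.univ : Finset (Fin (31 * m + 6))).card = 31 * m + 6 := by simp
  rw [hcard, hcU] at hub0
  -- a minimum weight codeword of weight exactly 16m+2
  have hex : ∃ x ∈ C, x ≠ 0 ∧ hammingNorm x = 16 * m + 2 := by
    by_contra hc
    push_neg at hc
    have hd' : ∀ y ∈ C, y ≠ 0 → 16 * m + 4 ≤ hammingNorm y := by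
      intro y hy hy0
      have a1 := hd y hy hy0
      have a2 := heven y hy
      have a3 := hc y hy hy0
      omega
    have hlb := code_sum_ge C _ hd'
    rw [hcard] at hlb
    omega
  obtain ⟨x, hxC, hx0, hxw⟩ := hex
  -- first residual code D1
  set D1 := C.map (proj (supp x)) with hD1
  have hr1 : Module.finrank (ZMod 2) D1 = 4 := by
    have h := resid_rank C (16 * m + 2) hd x hxC hx0 (by rw [hxw]; omega)
    rw [← hD1, hrk] at h; omega
  have hpar1 : ∀ z ∈ D1, 2 ∣ hammingNorm z := by
    intro z hz
    obtain ⟨y, hyC, rfl⟩ := Submodule.mem_map.1 hz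
    have p1 := heven y hyC
    have p2 : 2 ∣ (supp y ∩ supp x).card := by
      rw [Finset.inter_comm]; exact hinter x hxC y hyC
    have h4 : (supp y \ supp x).card + (supp y ∩ supp x).card = (supp y).card :=
      Finset.card_sdiff_add_card_inter _ _
    have hz' : hammingNorm (proj (supp x) y) = (supp y \ supp x).card := by
      rw [wt_eq, supp_proj]
    rw [hz']
    simp only [wt_eq] at p1
    omega
  have hd1 : ∀ z ∈ D1, z ≠ 0 → 8 * m + 2 ≤ hammingNorm z := by
    intro z hz hz0
    have h1 := resid_dist C (16 * m + 2) hd x hxC z hz hz0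
    have h2 := hpar1 z hz
    rw [hxw] at h1
    omega
  have hT1 : ∀ z ∈ D1, ∀ i, i ∉ (Finset.univ \ supp x) → z i = 0 := by
    rintro z hz i hi
    obtain ⟨y, hyC, rfl⟩ := Submodule.mem_map.1 hz
    rw [proj_apply, if_pos (by simpa using hi)]
  have hcT1 : ((Finset.univ : Finset (Fin (31 * m + 6))) \ supp x).card = 15 * m + 4 := by
    have hsx : (supp x).card = 16 * m + 2 := by rw [← wt_eq]; exact hxw
    rw [Finset.card_sdiff_of_subset (Finset.subset_univ _), hcU, hsx]
    omega
  have hcard1 : (codeF D1).card = 16 := by rw [codeF_card, hr1]; norm_num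
  have hub1 := code_sum_le D1 _ hT1
  rw [hcard1, hcT1] at hub1
  -- a codeword of D1 of weight exactly 8m+2
  have hex1 : ∃ z ∈ D1, z ≠ 0 ∧ hammingNorm z = 8 * m + 2 := by
    by_contra hc
    push_neg at hc
    have hd' : ∀ z ∈ D1, z ≠ 0 → 8 * m + 4 ≤ hammingNorm z := by
      intro z hz hz0
      have a1 := hd1 z hz hz0
      have a2 := hpar1 z hz
      have a3 := hc z hz hz0
      omega
    have hlb := code_sum_ge D1 _ hd'
    rw [hcard1] at hlb
    omega
  obtain ⟨z1, hz1D, hz10, hz1w⟩ := hex1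
  -- second residual code D2
  set D2 := D1.map (proj (supp z1)) with hD2
  have hr2 : Module.finrank (ZMod 2) D2 = 3 := by
    have h := resid_rank D1 (8 * m + 2) hd1 z1 hz1D hz10 (by rw [hz1w]; omega)
    rw [← hD2, hr1] at h; omega
  have hd2 : ∀ z ∈ D2, z ≠ 0 → 4 * m + 1 ≤ hammingNorm z := by
    intro z hz hz0
    have h1 := resid_dist D1 (8 * m + 2) hd1 z1 hz1D z hz hz0
    rw [hz1w] at h1
    omega
  have hT2 : ∀ z ∈ D2, ∀ i, i ∉ (Finset.univ \ supp x) \ supp z1 → z i = 0 := by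
    rintro z hz i hi
    obtain ⟨y, hyD, rfl⟩ := Submodule.mem_map.1 hz
    rw [proj_apply]
    by_cases h : i ∈ supp z1
    · rw [if_pos h]
    · rw [if_neg h]
      exact hT1 y hyD i fun hT => hi (Finset.mem_sdiff.2 ⟨hT, h⟩)
  have hsub1 : supp z1 ⊆ Finset.univ \ supp x := by
    intro i hi
    by_contra hni
    exact mem_supp.1 hi (hT1 z1 hz1D i hni)
  have hcT2 : (((Finset.univ : Finset (Fin (31 * m + 6))) \ supp x) \ supp z1).card
      = 7 * m + 2 := by
    have hsz : (supp z1).card = 8 * m + 2 := by rw [← wt_eq]; exact hz1w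
    rw [Finset.card_sdiff_of_subset hsub1, hcT1, hsz]
    omega
  have hcard2 : (codeF D2).card = 8 := by rw [codeF_card, hr2]; norm_num
  have hub2 := code_sum_le D2 _ hT2
  rw [hcard2, hcT2] at hub2
  -- a codeword of D2 of weight exactly 4m+1
  have hex2 : ∃ z ∈ D2, z ≠ 0 ∧ hammingNorm z = 4 * m + 1 := by
    by_contra hc
    push_neg at hc
    have hd' : ∀ z ∈ D2, z ≠ 0 → 4 * m + 2 ≤ hammingNorm z := by
      intro z hz hz0
      have a1 := hd2 z hz hz0
      have a3 := hc z hz hz0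
      omega
    have hlb := code_sum_ge D2 _ hd'
    rw [hcard2] at hlb
    omega
  obtain ⟨z2, hz2D, hz20, hz2w⟩ := hex2
  -- third residual code D3
  set D3 := D2.map (proj (supp z2)) with hD3
  have hr3 : Module.finrank (ZMod 2) D3 = 2 := by
    have h := resid_rank D2 (4 * m + 1) hd2 z2 hz2D hz20 (by rw [hz2w]; omega)
    rw [← hD3, hr2] at h; omega
  have hd3 : ∀ z ∈ D3, z ≠ 0 → 2 * m + 1 ≤ hammingNorm z := by
    intro z hz hz0
    have h1 := resid_dist D2 (4 * m + 1) hd2 z2 hz2D z hz hz0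
    rw [hz2w] at h1
    omega
  have hT3 : ∀ z ∈ D3, ∀ i,
      i ∉ ((Finset.univ \ supp x) \ supp z1) \ supp z2 → z i = 0 := by
    rintro z hz i hi
    obtain ⟨y, hyD, rfl⟩ := Submodule.mem_map.1 hz
    rw [proj_apply]
    by_cases h : i ∈ supp z2
    · rw [if_pos h]
    · rw [if_neg h]
      exact hT2 y hyD i fun hT => hi (Finset.mem_sdiff.2 ⟨hT, h⟩)
  have hsub2 : supp z2 ⊆ (Finset.univ \ supp x) \ supp z1 := by
    intro i hi
    by_contra hni
    exact mem_supp.1 hi (hT2 z2 hz2D i hni)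
  have hcT3 : ((((Finset.univ : Finset (Fin (31 * m + 6))) \ supp x) \ supp z1)
      \ supp z2).card = 3 * m + 1 := by
    have hsz : (supp z2).card = 4 * m + 1 := by rw [← wt_eq]; exact hz2w
    rw [Finset.card_sdiff_of_subset hsub2, hcT2, hsz]
    omega
  have hcard3 : (codeF D3).card = 4 := by rw [codeF_card, hr3]; norm_num
  have hub3 := code_sum_le D3 _ hT3
  rw [hcard3, hcT3] at hub3
  have hlb3 := code_sum_ge D3 _ hd3
  rw [hcard3] at hlb3
  omega

end NoSOAux

/-- For every `m ≥ 1`: a binary self-orthogonal `[31m+6, 5]` code with minimum distance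
`≥ 16m+2` would yield an even-like binary `[15m+4, 4]` code with minimum distance
`≥ 8m+2` (contradicting the Griesmer bound); hence no such self-orthogonal code exists. -/
theorem no_so_31m6 (m : ℕ) (hm : 1 ≤ m) :
    ((∃ C : Submodule (ZMod 2) (Fin (31 * m + 6) → ZMod 2),
        IsSO C ∧ Module.finrank (ZMod 2) C = 5 ∧
          ∀ x ∈ C, x ≠ 0 → 16 * m + 2 ≤ hammingNorm x) →
      ∃ C : Submodule (ZMod 2) (Fin (15 * m + 4) → ZMod 2),
        Module.finrank (ZMod 2) C = 4 ∧ (∀ x ∈ C, ∑ i, x i = 0) ∧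
          ∀ x ∈ C, x ≠ 0 → 8 * m + 2 ≤ hammingNorm x) ∧
    ¬ ∃ C : Submodule (ZMod 2) (Fin (31 * m + 6) → ZMod 2),
        IsSO C ∧ Module.finrank (ZMod 2) C = 5 ∧
          ∀ x ∈ C, x ≠ 0 → 16 * m + 2 ≤ hammingNorm x :=
  ⟨fun h => absurd h (NoSOAux.key m), NoSOAux.key m⟩
end
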